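/- arXiv:2508.18854 — 2 statements merged into one kernel-verified Lean document; each statement's English description precedes it below -/
import Mathlib

section
/- Under the hypotheses of the information-form update (P, R symmetric positive definite, S = H P Hᵀ + R, K = P Hᵀ S⁻¹), the gain satisfies K = (P⁻¹ + Hᵀ R⁻¹ H)⁻¹ Hᵀ R⁻¹. -/
open Matrix

/-- The Kalman gain `K = P Hᵀ S⁻¹` with `S = H P Hᵀ + R` satisfies
`K = (P⁻¹ + Hᵀ R⁻¹ H)⁻¹ Hᵀ R⁻¹` when `P` and `R` are symmetric positive definite. -/
theorem kalman_gain_information_form {m nt : ℕ}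
    (P : Matrix (Fin m) (Fin m) ℝ)
    (R : Matrix (Fin nt) (Fin nt) ℝ)
    (H : Matrix (Fin nt) (Fin m) ℝ)
    (hP : P.PosDef) (hR : R.PosDef) :
    P * Hᵀ * (H * P * Hᵀ + R)⁻¹ = (P⁻¹ + Hᵀ * R⁻¹ * H)⁻¹ * Hᵀ * R⁻¹ := by
  have hHPH : (H * P * Hᵀ).PosSemidef := by
    have := hP.posSemidef.mul_mul_conjTranspose_same H
    simpa [conjTranspose_eq_transpose_of_trivial] using this
  have hS : (H * P * Hᵀ + R).PosDef := Matrix.PosDef.posSemidef_add hHPH hR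
  have hHRH : (Hᵀ * R⁻¹ * H).PosSemidef := by
    have := hR.inv.posSemidef.mul_mul_conjTranspose_same Hᵀ
    simpa [conjTranspose_eq_transpose_of_trivial] using this
  have hA : (P⁻¹ + Hᵀ * R⁻¹ * H).PosDef := hP.inv.add_posSemidef hHRH
  have hPinv : P⁻¹ * P = 1 := nonsing_inv_mul P hP.det_pos.ne'.isUnit
  have hRinv : R⁻¹ * R = 1 := nonsing_inv_mul R hR.det_pos.ne'.isUnit
  have hAinv : (P⁻¹ + Hᵀ * R⁻¹ * H)⁻¹ * (P⁻¹ + Hᵀ * R⁻¹ * H) = 1 :=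
    nonsing_inv_mul _ hA.det_pos.ne'.isUnit
  have hSinv : (H * P * Hᵀ + R) * (H * P * Hᵀ + R)⁻¹ = 1 :=
    mul_nonsing_inv _ hS.det_pos.ne'.isUnit
  have key : (P⁻¹ + Hᵀ * R⁻¹ * H) * (P * Hᵀ) = Hᵀ * R⁻¹ * (H * P * Hᵀ + R) := by
    rw [Matrix.add_mul, Matrix.mul_add]
    simp only [← Matrix.mul_assoc]
    rw [hPinv, Matrix.one_mul, Matrix.mul_assoc Hᵀ R⁻¹ R, hRinv, Matrix.mul_one, add_comm]
  calc P * Hᵀ * (H * P * Hᵀ + R)⁻¹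
      = (P⁻¹ + Hᵀ * R⁻¹ * H)⁻¹ * ((P⁻¹ + Hᵀ * R⁻¹ * H) * (P * Hᵀ)) * (H * P * Hᵀ + R)⁻¹ := by
        rw [← Matrix.mul_assoc, hAinv, Matrix.one_mul]
    _ = (P⁻¹ + Hᵀ * R⁻¹ * H)⁻¹ * (Hᵀ * R⁻¹) * ((H * P * Hᵀ + R) * (H * P * Hᵀ + R)⁻¹) := by
        rw [key]; simp only [Matrix.mul_assoc]
    _ = (P⁻¹ + Hᵀ * R⁻¹ * H)⁻¹ * Hᵀ * R⁻¹ := by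
        rw [hSinv, Matrix.mul_one]; simp only [Matrix.mul_assoc]
end

section
/- Decentralized fusion with CCMN equals centralized fusion (covariance part): under the assumptions that each Jacobian block ∇h_j = C_j T_j with T_j having rank ≥ n_j and ∇h_j full row rank, the global posterior information P_{k|k}⁻¹ = P_{k|k-1}⁻¹ + Σ_j M_j T_jᵀ Î_j T_j with M_j = ∇hᵀ R⁻¹(*j) R_j (∇h_j†)ᵀ and Î_j = C_jᵀ R_j⁻¹ C_j equals P_{k|k-1}⁻¹ + ∇hᵀ R⁻¹ ∇h. -/
open Matrix

/-- `Ad` is the Moore–Penrose pseudo-inverse of `A`. -/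
def IsMoorePenrose {n m : Type*} [Fintype n] [Fintype m]
    (A : Matrix n m ℝ) (Ad : Matrix m n ℝ) : Prop :=
  A * Ad * A = A ∧ Ad * A * Ad = Ad ∧ (A * Ad)ᵀ = A * Ad ∧ (Ad * A)ᵀ = Ad * A

/-- The `j`-th column block of a matrix with columns indexed by `(j : Fin N) × Fin (n j)`. -/
def colBlock {N : ℕ} {n : Fin N → ℕ} {I : Type*}
    (M : Matrix I ((j : Fin N) × Fin (n j)) ℝ) (j : Fin N) :
    Matrix I (Fin (n j)) ℝ :=
  fun a b => M a ⟨j, b⟩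

/-- The vertical stack of matrices `B j : ℝ^{n_j × m}`. -/
def vstack {N m : ℕ} {n : Fin N → ℕ}
    (B : (j : Fin N) → Matrix (Fin (n j)) (Fin m) ℝ) :
    Matrix ((j : Fin N) × Fin (n j)) (Fin m) ℝ :=
  fun a c => B a.1 a.2 c

lemma isUnit_of_rank_eq_card {k : ℕ} (A : Matrix (Fin k) (Fin k) ℝ)
    (h : A.rank = k) : IsUnit A := by
  rw [← mulVec_surjective_iff_isUnit]
  have ht : LinearMap.range A.mulVecLin = ⊤ := by
    apply Submodule.eq_top_of_finrank_eq
    rw [← Matrix.rank, h]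
    simp
  intro v
  exact (LinearMap.range_eq_top.mp ht) v

lemma mp_right_inv {k l : ℕ} (A : Matrix (Fin k) (Fin l) ℝ) (Ad : Matrix (Fin l) (Fin k) ℝ)
    (hMP : IsMoorePenrose A Ad) (h : A.rank = k) : A * Ad = 1 := by
  have hAAT : IsUnit (A * Aᵀ) :=
    isUnit_of_rank_eq_card _ (by rw [rank_self_mul_transpose, h])
  have hd : IsUnit (A * Aᵀ).det := (isUnit_iff_isUnit_det _).mp hAAT
  have h1 : A * Ad * (A * Aᵀ) = A * Aᵀ := by
    rw [← Matrix.mul_assoc, hMP.1]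
  have := congrArg (· * (A * Aᵀ)⁻¹) h1
  simpa [Matrix.mul_assoc, Matrix.mul_nonsing_inv _ hd] using this

lemma sum_colBlock_mul {N m : ℕ} {n : Fin N → ℕ} {I : Type*} [Fintype I]
    (A : Matrix I ((j : Fin N) × Fin (n j)) ℝ)
    (B : (j : Fin N) → Matrix (Fin (n j)) (Fin m) ℝ) :
    ∑ j : Fin N, colBlock A j * B j = A * vstack B := by
  ext a c
  rw [Matrix.sum_apply, Matrix.mul_apply, ← Finset.univ_sigma_univ, Finset.sum_sigma]
  exact Finset.sum_congr rfl fun j _ => by rw [Matrix.mul_apply]; rfl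

/-- Decentralized fusion with cross-correlated measurement noises equals the
centralized fusion (covariance part):
`P⁻¹ + Σ_j M_j T_jᵀ Î_j T_j = P⁻¹ + ∇hᵀ R⁻¹ ∇h`, where
`M_j = ∇hᵀ R⁻¹(*j) R_j (∇h_j†)ᵀ`, `C_j = ∇h_j T_j†` and `Î_j = C_jᵀ R_j⁻¹ C_j`. -/
theorem decentralized_ccmn_fusion_covariance_eq_centralized
    {N m : ℕ} {n mj : Fin N → ℕ}
    (H : (j : Fin N) → Matrix (Fin (n j)) (Fin m) ℝ)
    (Hd : (j : Fin N) → Matrix (Fin m) (Fin (n j)) ℝ)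
    (hHMP : ∀ j, IsMoorePenrose (H j) (Hd j))
    (hrank : ∀ j, (H j).rank = n j)
    (T : (j : Fin N) → Matrix (Fin (mj j)) (Fin m) ℝ)
    (Td : (j : Fin N) → Matrix (Fin m) (Fin (mj j)) ℝ)
    (hTMP : ∀ j, IsMoorePenrose (T j) (Td j))
    (hTrank : ∀ j, (n j : ℕ) ≤ (T j).rank)
    (hfact : ∀ j, (H j * Td j) * T j = H j)
    (Rj : (j : Fin N) → Matrix (Fin (n j)) (Fin (n j)) ℝ)
    (hRj : ∀ j, IsUnit (Rj j).det)
    (R : Matrix ((j : Fin N) × Fin (n j)) ((j : Fin N) × Fin (n j)) ℝ)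
    (hR : IsUnit R.det)
    (Pinv : Matrix (Fin m) (Fin m) ℝ) :
    Pinv + ∑ j : Fin N,
        ((vstack H)ᵀ * colBlock R⁻¹ j * Rj j * (Hd j)ᵀ) *
          ((T j)ᵀ * ((H j * Td j)ᵀ * (Rj j)⁻¹ * (H j * Td j)) * T j) =
      Pinv + (vstack H)ᵀ * R⁻¹ * vstack H := by
  congr 1
  have hterm : ∀ j : Fin N,
      ((vstack H)ᵀ * colBlock R⁻¹ j * Rj j * (Hd j)ᵀ) *
        ((T j)ᵀ * ((H j * Td j)ᵀ * (Rj j)⁻¹ * (H j * Td j)) * T j) =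
      (vstack H)ᵀ * (colBlock R⁻¹ j * H j) := by
    intro j
    have hHHd : H j * Hd j = 1 := mp_right_inv _ _ (hHMP j) (hrank j)
    have hHdHT : (Hd j)ᵀ * (H j)ᵀ = 1 := by
      rw [← Matrix.transpose_mul, hHMP j |>.2.2.1, hHHd]
    have hmid : (T j)ᵀ * ((H j * Td j)ᵀ * (Rj j)⁻¹ * (H j * Td j)) * T j
        = (H j)ᵀ * (Rj j)⁻¹ * H j := by
      have : (T j)ᵀ * (H j * Td j)ᵀ = (H j)ᵀ := by
        rw [← Matrix.transpose_mul, hfact j]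
      calc (T j)ᵀ * ((H j * Td j)ᵀ * (Rj j)⁻¹ * (H j * Td j)) * T j
          = ((T j)ᵀ * (H j * Td j)ᵀ) * (Rj j)⁻¹ * ((H j * Td j) * T j) := by
            simp only [Matrix.mul_assoc]
        _ = (H j)ᵀ * (Rj j)⁻¹ * H j := by rw [this, hfact j]
    rw [hmid]
    calc (vstack H)ᵀ * colBlock R⁻¹ j * Rj j * (Hd j)ᵀ * ((H j)ᵀ * (Rj j)⁻¹ * H j)
        = (vstack H)ᵀ * (colBlock R⁻¹ j * (Rj j * (((Hd j)ᵀ * (H j)ᵀ) * ((Rj j)⁻¹ * H j)))) := by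
          simp only [Matrix.mul_assoc]
      _ = (vstack H)ᵀ * (colBlock R⁻¹ j * H j) := by
          rw [hHdHT, Matrix.one_mul, ← Matrix.mul_assoc (Rj j),
            Matrix.mul_nonsing_inv _ (hRj j), Matrix.one_mul]
  calc ∑ j : Fin N,
      ((vstack H)ᵀ * colBlock R⁻¹ j * Rj j * (Hd j)ᵀ) *
        ((T j)ᵀ * ((H j * Td j)ᵀ * (Rj j)⁻¹ * (H j * Td j)) * T j)
      = ∑ j : Fin N, (vstack H)ᵀ * (colBlock R⁻¹ j * H j) := by
        exact Finset.sum_congr rfl fun j _ => hterm j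
    _ = (vstack H)ᵀ * ∑ j : Fin N, colBlock R⁻¹ j * H j := by
        rw [Matrix.mul_sum]
    _ = (vstack H)ᵀ * (R⁻¹ * vstack H) := by rw [sum_colBlock_mul]
    _ = (vstack H)ᵀ * R⁻¹ * vstack H := by rw [Matrix.mul_assoc]
end
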